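/- Let r be a radii assignment on finite S ⊂ R^d with interference at most i, and let r̄(s) = min(r(s), R_min) for all s except a set X of modified sensors where r̄(s) = R_min, such that each bucket of side R_min contains at most K sensors of X. Then the interference of r̄ is at most 3^d · (i + K). -/

import Mathlib

open scoped Classical

/-- Let `r` be a radii assignment on finite `S ⊂ ℝ^d` with interference at most `i`,
and let `r̄ s = min (r s) R_min` for all `s` except a set `X` of modified sensors where
`r̄ s = R_min`, such that each bucket of side `R_min` contains at most `K` sensors of
`X`. Then the interference of `r̄` is at most `3^d * (i + K)`. -/
theorem capped_interference_bound (d : ℕ) (Rmin : ℝ) (hR : 0 < Rmin)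
    (S X : Finset (EuclideanSpace ℝ (Fin d))) (hXS : X ⊆ S)
    (r : EuclideanSpace ℝ (Fin d) → ℝ) (i K : ℕ)
    -- `r` has interference at most `i`
    (hi : ∀ p : EuclideanSpace ℝ (Fin d),
      (S.filter fun s => dist s p ≤ r s).card ≤ i)
    -- each bucket of the side-`Rmin` grid contains at most `K` sensors of `X`
    (hK : ∀ k : Fin d → ℤ,
      (X.filter fun s => ∀ j, ⌊s j / Rmin⌋ = k j).card ≤ K)
    (rbar : EuclideanSpace ℝ (Fin d) → ℝ)
    (hrbar : ∀ s ∈ S, rbar s = if s ∈ X then Rmin else min (r s) Rmin) :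
    ∀ p : EuclideanSpace ℝ (Fin d),
      (S.filter fun s => dist s p ≤ rbar s).card ≤ 3 ^ d * (i + K) := by
  intro p
  classical
  set F := S.filter fun s => dist s p ≤ rbar s with hF
  have hcoord : ∀ s ∈ F, ∀ j : Fin d,
      ⌊p j / Rmin⌋ - 1 ≤ ⌊s j / Rmin⌋ ∧ ⌊s j / Rmin⌋ ≤ ⌊p j / Rmin⌋ + 1 := by
    intro s hs j
    rw [hF, Finset.mem_filter] at hs
    obtain ⟨hsS, hd⟩ := hs
    have hrb : rbar s ≤ Rmin := by
      rw [hrbar s hsS]; split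
      · exact le_rfl
      · exact min_le_right _ _
    have hdist : dist (s j) (p j) ≤ dist s p := by
      rw [EuclideanSpace.dist_eq]
      have h0 : dist (s j) (p j) = Real.sqrt (dist (s j) (p j) ^ 2) := by
        rw [Real.sqrt_sq dist_nonneg]
      rw [h0]
      apply Real.sqrt_le_sqrt
      exact Finset.single_le_sum (f := fun i => dist (s i) (p i) ^ 2)
        (fun i _ => sq_nonneg _) (Finset.mem_univ j)
    have h1 : |s j - p j| ≤ Rmin := by
      rw [← Real.dist_eq]; exact hdist.trans (hd.trans hrb)
    have habs := abs_le.mp h1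
    constructor
    · have hle : p j / Rmin - 1 ≤ s j / Rmin := by
        rw [sub_le_iff_le_add,
          (by field_simp : s j / Rmin + 1 = (s j + Rmin) / Rmin)]
        gcongr
        linarith [habs.1]
      have h2 := Int.floor_le_floor hle
      rwa [show p j / Rmin - 1 = p j / Rmin - ((1 : ℤ) : ℝ) by push_cast; ring,
        Int.floor_sub_intCast] at h2
    · have hle : s j / Rmin ≤ p j / Rmin + 1 := by
        rw [(by field_simp : p j / Rmin + 1 = (p j + Rmin) / Rmin)]
        gcongr
        linarith [habs.2]
      calc ⌊s j / Rmin⌋ ≤ ⌊p j / Rmin + 1⌋ := Int.floor_le_floor hle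
        _ = ⌊p j / Rmin⌋ + 1 := Int.floor_add_one _
  have hbound : ∀ ε : Fin d → Fin 3,
      (F.filter fun s => ∀ j, ⌊s j / Rmin⌋ = ⌊p j / Rmin⌋ + (ε j : ℤ) - 1).card ≤ i + K := by
    intro ε
    have hsub2 : (F.filter fun s => ∀ j, ⌊s j / Rmin⌋ = ⌊p j / Rmin⌋ + (ε j : ℤ) - 1) ⊆
        (S.filter fun s => dist s p ≤ r s) ∪
        (X.filter fun s => ∀ j, ⌊s j / Rmin⌋ = ⌊p j / Rmin⌋ + (ε j : ℤ) - 1) := by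
      intro s hs
      simp only [hF, Finset.mem_filter, Finset.mem_union] at hs ⊢
      obtain ⟨⟨hsS, hd⟩, hb⟩ := hs
      by_cases hx : s ∈ X
      · exact Or.inr ⟨hx, hb⟩
      · refine Or.inl ⟨hsS, ?_⟩
        rw [hrbar s hsS, if_neg hx] at hd
        exact hd.trans (min_le_left _ _)
    calc (F.filter fun s => ∀ j, ⌊s j / Rmin⌋ = ⌊p j / Rmin⌋ + (ε j : ℤ) - 1).card
        ≤ _ := Finset.card_le_card hsub2
      _ ≤ _ + _ := Finset.card_union_le _ _
      _ ≤ i + K := Nat.add_le_add (hi p) (hK fun j => ⌊p j / Rmin⌋ + (ε j : ℤ) - 1)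
  have hsub : F ⊆ (Finset.univ : Finset (Fin d → Fin 3)).biUnion fun ε =>
      F.filter fun s => ∀ j, ⌊s j / Rmin⌋ = ⌊p j / Rmin⌋ + (ε j : ℤ) - 1 := by
    intro s hs
    have hc := hcoord s hs
    have hmem : ∀ j, (⌊s j / Rmin⌋ - ⌊p j / Rmin⌋ + 1).toNat < 3 := by
      intro j
      have h1 := (hc j).1
      have h2 := (hc j).2
      omega
    refine Finset.mem_biUnion.mpr ⟨fun j => ⟨_, hmem j⟩, Finset.mem_univ _, ?_⟩
    refine Finset.mem_filter.mpr ⟨hs, fun j => ?_⟩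
    have h1 := (hc j).1
    have hval : ((⟨(⌊s j / Rmin⌋ - ⌊p j / Rmin⌋ + 1).toNat, hmem j⟩ : Fin 3) : ℤ)
        = ((⌊s j / Rmin⌋ - ⌊p j / Rmin⌋ + 1).toNat : ℤ) := rfl
    rw [hval]
    omega
  calc F.card ≤ _ := Finset.card_le_card hsub
    _ ≤ ∑ ε : Fin d → Fin 3,
        (F.filter fun s => ∀ j, ⌊s j / Rmin⌋ = ⌊p j / Rmin⌋ + (ε j : ℤ) - 1).card :=
      Finset.card_biUnion_le
    _ ≤ ∑ _ε : Fin d → Fin 3, (i + K) := Finset.sum_le_sum fun ε _ => hbound ε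
    _ = 3 ^ d * (i + K) := by
      simp [Finset.sum_const, Finset.card_univ, mul_comm]
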